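/- Let V', V be finite-dimensional k-vector spaces with dim V = n ≤ dim V' = n'. Let w, w' : V' → V be two surjective linear maps such that Λⁿw = Λⁿw' as maps ΛⁿV' → ΛⁿV. Then there exists a unique g ∈ SL(V) (invertible with det g = 1) such that w' = g ∘ w. -/

import Mathlib

open ExteriorAlgebra in
theorem extMap_mem {R M N : Type*} [CommRing R] [AddCommGroup M] [Module R M]
    [AddCommGroup N] [Module R N] (n : ℕ) (f : M →ₗ[R] N) :
    ∀ x ∈ ⋀[R]^n M, (ExteriorAlgebra.map f).toLinearMap x ∈ ⋀[R]^n N := by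
  intro x hx
  have h : Submodule.map (ExteriorAlgebra.map f).toLinearMap (⋀[R]^n M) ≤ ⋀[R]^n N := by
    rw [exteriorPower, exteriorPower, Submodule.map_pow, ι_range_map_map]
    exact pow_le_pow_left' LinearMap.map_le_range n
  exact h ⟨x, hx, rfl⟩

/-- The `n`-th exterior power `Λⁿf : ΛⁿM → ΛⁿN` of a linear map `f : M → N`. -/
noncomputable def extMap {R M N : Type*} [CommRing R] [AddCommGroup M] [Module R M]
    [AddCommGroup N] [Module R N] (n : ℕ) (f : M →ₗ[R] N) :
    ⋀[R]^n M →ₗ[R] ⋀[R]^n N :=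
  (ExteriorAlgebra.map f).toLinearMap.restrict (extMap_mem n f)

/-- If `w, w' : V' → V` are surjective with `dim V = n ≤ dim V' = n'` and
`Λⁿw = Λⁿw'`, then there is a unique `g ∈ SL(V)` (invertible with `det g = 1`) such that
`w' = g ∘ w`. -/
theorem existsUnique_sl_of_top_exteriorPower_eq
    (k : Type*) [Field k] (V V' : Type*)
    [AddCommGroup V] [Module k V] [AddCommGroup V'] [Module k V']
    [FiniteDimensional k V] [FiniteDimensional k V']
    (n n' : ℕ) (hV : Module.finrank k V = n) (hV' : Module.finrank k V' = n')
    (hnn' : n ≤ n')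
    (w w' : V' →ₗ[k] V) (hw : Function.Surjective w) (hw' : Function.Surjective w')
    (h : extMap n w = extMap n w') :
    ∃! g : V ≃ₗ[k] V,
      LinearMap.det (g : V →ₗ[k] V) = 1 ∧ w' = (g : V →ₗ[k] V) ∘ₗ w := by
  classical
  subst hV
  let b : Module.Basis (Fin (Module.finrank k V)) k V :=
    (Module.finBasis k V).reindex (finCongr rfl)
  set n := Module.finrank k V with hn
  -- the determinant functional on the exterior algebra
  let F : ∀ i, V [⋀^Fin i]→ₗ[k] k :=
    fun i => if h : i = n then b.det.domDomCongr (finCongr h.symm) else 0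
  let D : ExteriorAlgebra k V →ₗ[k] k := ExteriorAlgebra.liftAlternating F
  have hD : ∀ v : Fin n → V, D (ExteriorAlgebra.ιMulti k n v) = b.det v := by
    intro v
    simp only [D, ExteriorAlgebra.liftAlternating_apply_ιMulti, F, dif_pos rfl]
    simp [AlternatingMap.domDomCongr_apply]
  -- consequence of the hypothesis on exterior powers
  have hmulti : ∀ m : Fin n → V',
      ExteriorAlgebra.ιMulti k n (⇑w ∘ m) = ExteriorAlgebra.ιMulti k n (⇑w' ∘ m) := by
    intro m
    have hm : ExteriorAlgebra.ιMulti k n m ∈ ⋀[k]^n V' :=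
      ExteriorAlgebra.ιMulti_range k n (Set.mem_range_self m)
    have h2 : extMap n w ⟨_, hm⟩ = extMap n w' ⟨_, hm⟩ := by rw [h]
    have h3 := congrArg Subtype.val h2
    simpa [extMap, LinearMap.restrict_apply, ExteriorAlgebra.map_apply_ιMulti] using h3
  -- choose preimages of the basis under w
  choose v hv using fun i => hw (b i)
  have hwv : ⇑w ∘ v = ⇑b := funext hv
  set u : Fin n → V := ⇑w' ∘ v with hu_def
  have hu : ExteriorAlgebra.ιMulti k n ⇑b = ExteriorAlgebra.ιMulti k n u := by
    rw [← hwv]; exact hmulti v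
  have hdetu : b.det u = 1 := by
    have h4 := congrArg D hu
    rw [hD, hD, Module.Basis.det_self] at h4
    exact h4.symm
  have hunit : IsUnit (b.det u) := by rw [hdetu]; exact isUnit_one
  obtain ⟨hli, hsp⟩ := (Module.Basis.is_basis_iff_det b).mpr hunit
  set ub : Module.Basis (Fin n) k V := Module.Basis.mk hli hsp.ge with hub
  -- kernel inclusion
  have hker : ∀ x : V', w x = 0 → w' x = 0 := by
    intro x hx
    have hzero : ∀ i, b.det (Function.update u i (w' x)) = 0 := by
      intro i
      have e1 : ExteriorAlgebra.ιMulti k n (⇑w ∘ Function.update v i x) = 0 := by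
        rw [Function.comp_update, hx, hwv]
        exact (ExteriorAlgebra.ιMulti k n).toMultilinearMap.map_update_zero ⇑b i
      have e2 : ExteriorAlgebra.ιMulti k n (Function.update u i (w' x)) = 0 := by
        rw [hu_def, ← Function.comp_update]
        rw [← hmulti (Function.update v i x)]
        exact e1
      have := congrArg D e2
      simpa [hD] using this
    have hc : ∀ i, ub.repr (w' x) i = 0 := by
      intro i
      have hcoord := congrArg (fun f : V →ₗ[k] k => f (w' x))
        (Module.Basis.det_smul_mk_coord_eq_det_update (e := b) hli hsp.ge i)
      simp only [LinearMap.smul_apply, smul_eq_mul, hdetu, one_mul,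
        MultilinearMap.toLinearMap_apply] at hcoord
      rw [show b.det.toMultilinearMap (Function.update u i (w' x)) = 0 from hzero i] at hcoord
      simpa [ub, Module.Basis.coord_apply] using hcoord
    have hrepr : ub.repr (w' x) = 0 := Finsupp.ext hc
    exact (LinearEquiv.map_eq_zero_iff ub.repr).mp hrepr
  -- the candidate map
  let s : V →ₗ[k] V' := b.constr k v
  have hsb : ∀ i, s (b i) = v i := fun i => b.constr_basis k v i
  set g0 : V →ₗ[k] V := w' ∘ₗ s with hg0
  have hws : ∀ x : V, w (s x) = x := by
    have hws' : w ∘ₗ s = LinearMap.id := by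
      apply b.ext
      intro i
      simp [s, Module.Basis.constr_basis, hv]
    intro x
    have := congrArg (fun f : V →ₗ[k] V => f x) hws'
    simpa using this
  have hgw : ∀ x : V', w' x = g0 (w x) := by
    intro x
    have hk : w (x - s (w x)) = 0 := by simp [map_sub, hws]
    have := hker _ hk
    rw [map_sub, sub_eq_zero] at this
    simpa [g0] using this
  have hw'eq : w' = g0 ∘ₗ w := LinearMap.ext fun x => by simpa using hgw x
  have hg0surj : Function.Surjective g0 := by
    intro y
    obtain ⟨x, hx⟩ := hw' y
    exact ⟨w x, by rw [← hgw x]; exact hx⟩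
  have hg0bij : Function.Bijective g0 :=
    ⟨LinearMap.injective_iff_surjective.mpr hg0surj, hg0surj⟩
  let g : V ≃ₗ[k] V := LinearEquiv.ofBijective g0 hg0bij
  have hgcoe : (g : V →ₗ[k] V) = g0 := rfl
  have hgb : ⇑g0 ∘ ⇑b = u := funext fun i => by simp [g0, hsb, hu_def]
  have hdet : LinearMap.det g0 = 1 := by
    have h5 := Module.Basis.det_comp b g0 ⇑b
    rw [hgb, hdetu, Module.Basis.det_self, mul_one] at h5
    exact h5.symm
  refine ⟨g, ⟨by rw [hgcoe]; exact hdet, by rw [hgcoe]; exact hw'eq⟩, ?_⟩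
  rintro g' ⟨-, hcomp'⟩
  apply LinearEquiv.toLinearMap_injective
  apply LinearMap.ext
  intro y
  obtain ⟨x, rfl⟩ := hw y
  have e1 : (g' : V →ₗ[k] V) (w x) = w' x := by rw [hcomp']; rfl
  have e2 : (g : V →ₗ[k] V) (w x) = w' x := by rw [hgcoe]; exact (hgw x).symm
  rw [e1, e2]
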